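/- arXiv:0911.2683 — 2 statements merged into one kernel-verified Lean document; each statement's English description precedes it below -/
import Mathlib

section
/- Let B be a finite set of permutations. Av(B) contains only finitely many of the vertical wedge alternations τ_m (m ≥ 1) if and only if B contains a permutation that avoids both of the permutations 132 and 312. -/
/-- A list of naturals is a permutation (in one-line notation) of `1,…,n`
where `n` is its length. -/
def IsPermList (l : List ℕ) : Prop :=
  l.Perm ((List.range l.length).map (· + 1))

/-- `f` is an occurrence of the pattern `β` in `π`: a strictly increasing
choice of indices of `π` whose entries are order isomorphic to `β`. -/
def IsOccurrence (π β : List ℕ) (f : Fin β.length → Fin π.length) : Prop :=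
  StrictMono f ∧ ∀ s t : Fin β.length, π.get (f s) < π.get (f t) ↔ β.get s < β.get t

/-- `π` contains the pattern `β`. -/
def PContains (π β : List ℕ) : Prop :=
  ∃ f : Fin β.length → Fin π.length, IsOccurrence π β f

/-- `π` avoids the pattern `β`. -/
def PAvoids (π β : List ℕ) : Prop :=
  ¬ PContains π β

/-- The class of permutations avoiding every member of `B`. -/
def Av (B : Set (List ℕ)) : Set (List ℕ) :=
  {π | IsPermList π ∧ ∀ β ∈ B, PAvoids π β}

/-- Insert a new maximum entry at (0-indexed) position `i` of `l`. -/
def insertMax (l : List ℕ) (i : ℕ) : List ℕ :=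
  l.insertIdx i (l.length + 1)

/-- Position `i` is an active site of `l` relative to `B`. -/
def ActiveSite (B : Set (List ℕ)) (l : List ℕ) (i : ℕ) : Prop :=
  i ≤ l.length ∧ insertMax l i ∈ Av B

/-- The increasing permutation `1,2,…,n`. -/
def incrPerm (n : ℕ) : List ℕ :=
  (List.range n).map (· + 1)

/-- A permutation (as a list) is a vertical alternation: every entry in an even
(1-indexed) position lies above every entry in an odd position, or vice versa.
(Index `s : Fin l.length` corresponds to 1-indexed position `s + 1`.) -/
def VerticalAlternation (l : List ℕ) : Prop :=
  (∀ s t : Fin l.length, s.val % 2 = 1 → t.val % 2 = 0 → l.get t < l.get s) ∨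
  (∀ s t : Fin l.length, s.val % 2 = 1 → t.val % 2 = 0 → l.get s < l.get t)

/-- The subsequence of entries in positions congruent to `r` (0-indexed, mod 2)
is increasing. -/
def IncOnRes (l : List ℕ) (r : ℕ) : Prop :=
  ∀ s t : Fin l.length, s < t → s.val % 2 = r → t.val % 2 = r → l.get s < l.get t

/-- The subsequence of entries in positions congruent to `r` (0-indexed, mod 2)
is decreasing. -/
def DecOnRes (l : List ℕ) (r : ℕ) : Prop :=
  ∀ s t : Fin l.length, s < t → s.val % 2 = r → t.val % 2 = r → l.get t < l.get s

/-- A vertical parallel alternation: a vertical alternation of even length whose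
odd-position and even-position subsequences are both increasing or both decreasing. -/
def IsVertParallel (l : List ℕ) : Prop :=
  VerticalAlternation l ∧ Even l.length ∧
    ((IncOnRes l 0 ∧ IncOnRes l 1) ∨ (DecOnRes l 0 ∧ DecOnRes l 1))

/-- A vertical wedge alternation: a vertical alternation of even length for which one of
the odd-position and even-position subsequences is increasing and the other decreasing. -/
def IsVertWedge (l : List ℕ) : Prop :=
  VerticalAlternation l ∧ Even l.length ∧
    ((IncOnRes l 0 ∧ DecOnRes l 1) ∨ (DecOnRes l 0 ∧ IncOnRes l 1))

/-- The vertical parallel alternation `σ_m`, with `σ_m(2i−1) = m+1−i` and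
`σ_m(2i) = 2m+1−i` (1-indexed). -/
def sigmaAlt (m : ℕ) : List ℕ :=
  (List.range (2 * m)).map (fun j => if j % 2 = 0 then m - j / 2 else 2 * m - j / 2)

/-- The vertical wedge alternation `τ_m`, with `τ_m(2i−1) = m+i` and
`τ_m(2i) = m+1−i` (1-indexed). -/
def tauAlt (m : ℕ) : List ℕ :=
  (List.range (2 * m)).map (fun j => if j % 2 = 0 then m + j / 2 + 1 else m - j / 2)

/-- Standardization: replace each entry of `l` by its rank among the entries of `l`. -/
def stList (l : List ℕ) : List ℕ :=
  l.map (fun x => (l.filter (fun y => y ≤ x)).length)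


section Aux

lemma tauAlt_length' (m : ℕ) : (tauAlt m).length = 2*m := by simp [tauAlt]

lemma tauAlt_get' (m : ℕ) (i : Fin (tauAlt m).length) :
    (tauAlt m).get i = if i.val % 2 = 0 then m + i.val / 2 + 1 else m - i.val / 2 := by
  rcases i with ⟨j, hj⟩; simp [tauAlt]

lemma tauAlt_nodup (m : ℕ) : (tauAlt m).Nodup := by
  rw [List.nodup_iff_injective_get]
  rintro ⟨a, ha⟩ ⟨b, hb⟩ h
  rw [tauAlt_get', tauAlt_get'] at h
  simp only [tauAlt_length'] at ha hb
  simp only at h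
  ext
  simp only
  split_ifs at h <;> omega

lemma tauAlt_isPermList (m : ℕ) : IsPermList (tauAlt m) := by
  unfold IsPermList
  rw [tauAlt_length']
  refine (List.subperm_of_subset (tauAlt_nodup m) ?_).perm_of_length_le
    (by simp [tauAlt_length'])
  intro x hx
  simp only [tauAlt, List.mem_map, List.mem_range] at hx
  obtain ⟨j, hj, rfl⟩ := hx
  simp only [List.mem_map, List.mem_range]
  split_ifs with h
  · exact ⟨m + j/2, by omega, by omega⟩
  · exact ⟨m - j/2 - 1, by omega, by omega⟩

lemma pcontains_trans {a b c : List ℕ} (h1 : PContains a b) (h2 : PContains b c) :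
    PContains a c := by
  obtain ⟨f, hf1, hf2⟩ := h1
  obtain ⟨g, hg1, hg2⟩ := h2
  exact ⟨f ∘ g, hf1.comp hg1, fun s t => (hf2 (g s) (g t)).trans (hg2 s t)⟩

lemma tauAlt_avoids132 (m : ℕ) : PAvoids (tauAlt m) [1,3,2] := by
  rintro ⟨f, hmono, hiso⟩
  set i0 : Fin ([1,3,2] : List ℕ).length := ⟨0, by decide⟩
  set i1 : Fin ([1,3,2] : List ℕ).length := ⟨1, by decide⟩
  set i2 : Fin ([1,3,2] : List ℕ).length := ⟨2, by decide⟩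
  have h01 : f i0 < f i1 := hmono (by decide)
  have h12 : f i1 < f i2 := hmono (by decide)
  have e01 := (hiso i0 i1).mpr (by decide)
  have e02 := (hiso i0 i2).mpr (by decide)
  have e21 := (hiso i2 i1).mpr (by decide)
  rw [tauAlt_get', tauAlt_get'] at e01 e02 e21
  have b0 : (f i0).val < 2*m := by have := (f i0).isLt; simpa [tauAlt_length'] using this
  have b1 : (f i1).val < 2*m := by have := (f i1).isLt; simpa [tauAlt_length'] using this
  have b2 : (f i2).val < 2*m := by have := (f i2).isLt; simpa [tauAlt_length'] using this
  have h01' : (f i0).val < (f i1).val := h01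
  have h12' : (f i1).val < (f i2).val := h12
  split_ifs at e01 e02 e21 <;> omega

lemma tauAlt_avoids312 (m : ℕ) : PAvoids (tauAlt m) [3,1,2] := by
  rintro ⟨f, hmono, hiso⟩
  set i0 : Fin ([3,1,2] : List ℕ).length := ⟨0, by decide⟩
  set i1 : Fin ([3,1,2] : List ℕ).length := ⟨1, by decide⟩
  set i2 : Fin ([3,1,2] : List ℕ).length := ⟨2, by decide⟩
  have h01 : f i0 < f i1 := hmono (by decide)
  have h12 : f i1 < f i2 := hmono (by decide)
  have e10 := (hiso i1 i0).mpr (by decide)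
  have e12 := (hiso i1 i2).mpr (by decide)
  have e20 := (hiso i2 i0).mpr (by decide)
  rw [tauAlt_get', tauAlt_get'] at e10 e12 e20
  have b0 : (f i0).val < 2*m := by have := (f i0).isLt; simpa [tauAlt_length'] using this
  have b1 : (f i1).val < 2*m := by have := (f i1).isLt; simpa [tauAlt_length'] using this
  have b2 : (f i2).val < 2*m := by have := (f i2).isLt; simpa [tauAlt_length'] using this
  have h01' : (f i0).val < (f i1).val := h01
  have h12' : (f i1).val < (f i2).val := h12
  split_ifs at e10 e12 e20 <;> omega

lemma permList_nodup {l : List ℕ} (h : IsPermList l) : l.Nodup := by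
  refine h.nodup_iff.mpr ?_
  exact (List.nodup_range).map (fun a b => by omega)

lemma prefix_maxmin (β : List ℕ) (hnd : β.Nodup)
    (h132 : PAvoids β [1,3,2]) (h312 : PAvoids β [3,1,2]) :
    ∀ k : Fin β.length, (∀ j, j < k → β.get j < β.get k) ∨ (∀ j, j < k → β.get k < β.get j) := by
  intro k
  by_contra h
  push_neg at h
  obtain ⟨⟨i, hik, hi⟩, ⟨j, hjk, hj⟩⟩ := h
  have hki : β.get k < β.get i :=
    lt_of_le_of_ne hi (fun e => absurd (List.Nodup.get_inj_iff hnd |>.mp e) (by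
      intro e'; exact absurd e' (ne_of_lt hik).symm))
  have hjk' : β.get j < β.get k :=
    lt_of_le_of_ne hj (fun e => absurd (List.Nodup.get_inj_iff hnd |>.mp e) (by
      intro e'; exact absurd e' (ne_of_lt hjk)))
  have hij : i ≠ j := fun e => by rw [e] at hki; omega
  rcases lt_or_gt_of_ne hij with hlt | hgt
  · exact h312 ⟨![i, j, k], by
      constructor
      · intro s t hst
        fin_cases s <;> fin_cases t <;> simp_all
      · intro s t
        fin_cases s <;> fin_cases t <;>
          simp_all [Matrix.cons_val_zero, Matrix.cons_val_one, Matrix.head_cons] <;> omega⟩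
  · exact h132 ⟨![j, i, k], by
      constructor
      · intro s t hst
        fin_cases s <;> fin_cases t <;> simp_all
      · intro s t
        fin_cases s <;> fin_cases t <;>
          simp_all [Matrix.cons_val_zero, Matrix.cons_val_one, Matrix.head_cons] <;> omega⟩

lemma tau_contains_of_avoids (β : List ℕ) (hperm : IsPermList β)
    (h132 : PAvoids β [1,3,2]) (h312 : PAvoids β [3,1,2]) (m : ℕ) (hm : β.length ≤ m) :
    PContains (tauAlt m) β := by
  classical
  have hnd := permList_nodup hperm
  have hpm := prefix_maxmin β hnd h132 h312
  refine ⟨fun k =>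
    if (∀ j, j < k → β.get j < β.get k) then
      ⟨2*k.val, by rw [tauAlt_length']; have := k.isLt; omega⟩
    else ⟨2*k.val+1, by rw [tauAlt_length']; have := k.isLt; omega⟩, ?_, ?_⟩
  · intro s t hst
    have hv : s.val < t.val := hst
    simp only [Fin.lt_def]
    split_ifs <;> simp <;> omega
  · intro s t
    have hs := s.isLt; have ht := t.isLt
    have hval : ∀ k : Fin β.length,
        (tauAlt m).get (if (∀ j, j < k → β.get j < β.get k) then
          (⟨2*k.val, by rw [tauAlt_length']; have := k.isLt; omega⟩ : Fin (tauAlt m).length)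
        else ⟨2*k.val+1, by rw [tauAlt_length']; have := k.isLt; omega⟩) =
        if (∀ j, j < k → β.get j < β.get k) then m + k.val + 1 else m - k.val := by
      intro k
      split_ifs with h <;> rw [tauAlt_get'] <;> simp only
      · rw [if_pos (by omega)]; omega
      · rw [if_neg (by omega)]; omega
    rw [hval s, hval t]
    rcases lt_trichotomy s t with hst | hst | hst
    · have hv : s.val < t.val := hst
      by_cases hT : (∀ j, j < t → β.get j < β.get t)
      · have h1 : β.get s < β.get t := hT s hst
        rw [if_pos hT]
        split_ifs with hS <;> omega
      · have h2 : β.get t < β.get s := ((hpm t).resolve_left hT) s hst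
        rw [if_neg hT]
        split_ifs with hS <;> omega
    · subst hst; simp
    · have hv : t.val < s.val := hst
      by_cases hS : (∀ j, j < s → β.get j < β.get s)
      · have h1 : β.get t < β.get s := hS t hst
        rw [if_pos hS]
        split_ifs with hT <;> omega
      · have h2 : β.get s < β.get t := ((hpm s).resolve_left hS) t hst
        rw [if_neg hS]
        split_ifs with hT <;> omega

end Aux

/-- `Av(B)` contains only finitely many of the vertical wedge
alternations `τ_m` iff `B` contains a permutation avoiding `132` and `312`. -/

theorem stmt4 (B : Set (List ℕ)) (hBfin : B.Finite) (hB : ∀ β ∈ B, IsPermList β) :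
    {π | (∃ m : ℕ, 1 ≤ m ∧ π = tauAlt m) ∧ π ∈ Av B}.Finite ↔
      ∃ β ∈ B, PAvoids β [1,3,2] ∧ PAvoids β [3,1,2] := by
  constructor
  · intro hfin
    by_contra hno
    push_neg at hno
    refine Set.infinite_of_injective_forall_mem
      (f := fun m : ℕ => tauAlt (m+1)) ?_ ?_ hfin
    · intro a b hab
      have hab' : tauAlt (a+1) = tauAlt (b+1) := hab
      have h := congrArg List.length hab'
      rw [tauAlt_length', tauAlt_length'] at h
      omega
    · intro a
      refine ⟨⟨a+1, by omega, rfl⟩, tauAlt_isPermList _, ?_⟩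
      intro β hβ hcont
      by_cases hc : PContains β [1,3,2]
      · exact tauAlt_avoids132 _ (pcontains_trans hcont hc)
      · have h2 : PContains β [3,1,2] := not_not.mp (hno β hβ hc)
        exact tauAlt_avoids312 _ (pcontains_trans hcont h2)
  · rintro ⟨β, hβB, hA1, hA2⟩
    apply Set.Finite.subset ((Set.finite_Iio β.length).image tauAlt)
    rintro π ⟨⟨m, hm1, rfl⟩, hAv⟩
    refine ⟨m, ?_, rfl⟩
    simp only [Set.mem_Iio]
    by_contra hge
    push_neg at hge
    exact hAv.2 β hβB (tau_contains_of_avoids β (hB β hβB) hA1 hA2 m hge)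
end

section
/- Let B be a finite set of permutations. Av(B) contains only finitely many of the reversed vertical parallel alternations σ_m^r (m ≥ 1) if and only if B contains a permutation that avoids all three of the permutations 321, 2143, and 2413. -/
section Aux
set_option linter.unusedVariables false

lemma get321' : ∀ s : Fin ([3,2,1] : List ℕ).length, ([3,2,1] : List ℕ).get s = 3 - s.val := by
  decide

lemma contains3 (π : List ℕ) (p0 p1 p2 : Fin π.length) (h01 : p0 < p1) (h12 : p1 < p2)
    (v21 : π.get p2 < π.get p1) (v10 : π.get p1 < π.get p0) : PContains π [3,2,1] := by
  refine ⟨![p0, p1, p2], ?_, ?_⟩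
  · intro a b hab
    fin_cases a <;> fin_cases b <;> simp_all <;>
      first
        | exact h01 | exact h12 | exact h01.trans h12
        | exact absurd hab (by decide)
  · intro s t
    simp only [get321']
    fin_cases s <;> fin_cases t <;> simp_all <;> omega

lemma get2143' : ∀ s : Fin ([2,1,4,3] : List ℕ).length,
    ([2,1,4,3] : List ℕ).get s =
      if s.val = 0 then 2 else if s.val = 1 then 1 else if s.val = 2 then 4 else 3 := by
  decide

lemma get2413' : ∀ s : Fin ([2,4,1,3] : List ℕ).length,
    ([2,4,1,3] : List ℕ).get s =
      if s.val = 0 then 2 else if s.val = 1 then 4 else if s.val = 2 then 1 else 3 := by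
  decide

lemma contains2143 (π : List ℕ) (p0 p1 p2 p3 : Fin π.length)
    (h01 : p0 < p1) (h12 : p1 < p2) (h23 : p2 < p3)
    (v10 : π.get p1 < π.get p0) (v03 : π.get p0 < π.get p3) (v32 : π.get p3 < π.get p2) :
    PContains π [2,1,4,3] := by
  refine ⟨![p0, p1, p2, p3], ?_, ?_⟩
  · intro a b hab
    fin_cases a <;> fin_cases b <;> simp_all <;>
      first
        | exact h01 | exact h12 | exact h23
        | exact h01.trans h12 | exact h12.trans h23 | exact (h01.trans h12).trans h23
        | exact absurd hab (by decide)
  · intro s t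
    simp only [get2143']
    fin_cases s <;> fin_cases t <;> simp_all <;> omega

lemma contains2413 (π : List ℕ) (p0 p1 p2 p3 : Fin π.length)
    (h01 : p0 < p1) (h12 : p1 < p2) (h23 : p2 < p3)
    (v20 : π.get p2 < π.get p0) (v03 : π.get p0 < π.get p3) (v31 : π.get p3 < π.get p1) :
    PContains π [2,4,1,3] := by
  refine ⟨![p0, p1, p2, p3], ?_, ?_⟩
  · intro a b hab
    fin_cases a <;> fin_cases b <;> simp_all <;>
      first
        | exact h01 | exact h12 | exact h23
        | exact h01.trans h12 | exact h12.trans h23 | exact (h01.trans h12).trans h23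
        | exact absurd hab (by decide)
  · intro s t
    simp only [get2413']
    fin_cases s <;> fin_cases t <;> simp_all <;> omega

lemma PContains.trans' {π β γ : List ℕ} (h1 : PContains π β) (h2 : PContains β γ) :
    PContains π γ := by
  obtain ⟨f, hf, hf2⟩ := h1
  obtain ⟨g, hg, hg2⟩ := h2
  exact ⟨f ∘ g, hf.comp hg, fun s t => (hf2 (g s) (g t)).trans (hg2 s t)⟩

/-- `l` splits at threshold `c`: entries ≤ c increasing, entries > c increasing. -/
def SplitAt (l : List ℕ) (c : ℕ) : Prop :=
  (∀ s t : Fin l.length, s < t → l.get s ≤ c → l.get t ≤ c → l.get s < l.get t) ∧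
  (∀ s t : Fin l.length, s < t → c < l.get s → c < l.get t → l.get s < l.get t)

lemma SplitAt.dec {l : List ℕ} {c : ℕ} (h : SplitAt l c) {p q : Fin l.length}
    (hpq : p < q) (hv : l.get q < l.get p) : c < l.get p ∧ l.get q ≤ c := by
  constructor
  · by_contra h'
    push_neg at h'
    exact absurd (h.1 p q hpq h' (le_trans (le_of_lt hv) h')) (by omega)
  · by_contra h'
    push_neg at h'
    exact absurd (h.2 p q hpq (lt_trans h' hv) h') (by omega)

lemma SplitAt.avoids321 {l : List ℕ} {c : ℕ} (h : SplitAt l c) : PAvoids l [3,2,1] := by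
  rintro ⟨f, hf, hiff⟩
  have v10 := (hiff ⟨1, by norm_num⟩ ⟨0, by norm_num⟩).mpr (by decide)
  have v21 := (hiff ⟨2, by norm_num⟩ ⟨1, by norm_num⟩).mpr (by decide)
  have d1 := h.dec (hf (show (⟨0, by norm_num⟩ : Fin _) < ⟨1, by norm_num⟩ by decide)) v10
  have d2 := h.dec (hf (show (⟨1, by norm_num⟩ : Fin _) < ⟨2, by norm_num⟩ by decide)) v21
  exact absurd d2.1 (not_lt.mpr d1.2)

lemma SplitAt.avoids2143 {l : List ℕ} {c : ℕ} (h : SplitAt l c) : PAvoids l [2,1,4,3] := by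
  rintro ⟨f, hf, hiff⟩
  have v10 := (hiff ⟨1, by norm_num⟩ ⟨0, by norm_num⟩).mpr (by decide)
  have v32 := (hiff ⟨3, by norm_num⟩ ⟨2, by norm_num⟩).mpr (by decide)
  have v03 := (hiff ⟨0, by norm_num⟩ ⟨3, by norm_num⟩).mpr (by decide)
  have d1 := h.dec (hf (show (⟨0, by norm_num⟩ : Fin _) < ⟨1, by norm_num⟩ by decide)) v10
  have d2 := h.dec (hf (show (⟨2, by norm_num⟩ : Fin _) < ⟨3, by norm_num⟩ by decide)) v32
  exact absurd ((d1.1.trans v03).trans_le d2.2) (lt_irrefl c)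

lemma SplitAt.avoids2413 {l : List ℕ} {c : ℕ} (h : SplitAt l c) : PAvoids l [2,4,1,3] := by
  rintro ⟨f, hf, hiff⟩
  have v20 := (hiff ⟨2, by norm_num⟩ ⟨0, by norm_num⟩).mpr (by decide)
  have v31 := (hiff ⟨3, by norm_num⟩ ⟨1, by norm_num⟩).mpr (by decide)
  have v03 := (hiff ⟨0, by norm_num⟩ ⟨3, by norm_num⟩).mpr (by decide)
  have d1 := h.dec (hf (show (⟨0, by norm_num⟩ : Fin _) < ⟨2, by norm_num⟩ by decide)) v20
  have d2 := h.dec (hf (show (⟨1, by norm_num⟩ : Fin _) < ⟨3, by norm_num⟩ by decide)) v31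
  exact absurd ((d1.1.trans v03).trans_le d2.2) (lt_irrefl c)

lemma sigmaAlt_length (m : ℕ) : (sigmaAlt m).length = 2 * m := by simp [sigmaAlt]

lemma sigmaRev_length (m : ℕ) : ((sigmaAlt m).reverse).length = 2 * m := by simp [sigmaAlt]

lemma sigmaRev_get (m : ℕ) (p : Fin ((sigmaAlt m).reverse).length) :
    ((sigmaAlt m).reverse).get p =
      if p.val % 2 = 0 then m + p.val / 2 + 1 else (p.val + 1) / 2 := by
  have hp : p.val < 2 * m := by simpa [sigmaAlt] using p.isLt
  rw [List.get_eq_getElem, List.getElem_reverse]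
  have hlen : (sigmaAlt m).length = 2 * m := sigmaAlt_length m
  have key : ∀ j (hj : j < 2 * m),
      (sigmaAlt m)[j]'(by rw [hlen]; exact hj) =
        if j % 2 = 0 then m - j / 2 else 2 * m - j / 2 := by
    intro j hj
    simp [sigmaAlt, List.getElem_map, List.getElem_range]
  simp only [hlen]
  rw [key _ (by omega)]
  rcases Nat.even_or_odd p.val with he | ho
  · have e1 : p.val % 2 = 0 := Nat.even_iff.mp he
    have e2 : (2 * m - 1 - p.val) % 2 = 1 := by omega
    simp only [e1, e2]
    norm_num
    omega
  · have e1 : p.val % 2 = 1 := Nat.odd_iff.mp ho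
    have e2 : (2 * m - 1 - p.val) % 2 = 0 := by omega
    simp only [e1, e2]
    norm_num
    omega

lemma sigmaRev_splitAt (m : ℕ) : SplitAt ((sigmaAlt m).reverse) m := by
  constructor <;>
    (intro s t hst hs ht
     have h1 : s.val < 2 * m := by simpa [sigmaAlt] using s.isLt
     have h2 : t.val < 2 * m := by simpa [sigmaAlt] using t.isLt
     simp only [sigmaRev_get] at hs ht ⊢
     rw [Fin.lt_def] at hst
     split_ifs at * <;> omega)

lemma sigmaAlt_nodup (m : ℕ) : (sigmaAlt m).Nodup := by
  apply List.Nodup.map_on _ List.nodup_range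
  intro x hx y hy hxy
  rw [List.mem_range] at hx hy
  split_ifs at hxy <;> omega

lemma sigmaAlt_mem (m a : ℕ) : a ∈ sigmaAlt m ↔ 1 ≤ a ∧ a ≤ 2 * m := by
  simp only [sigmaAlt, List.mem_map, List.mem_range]
  constructor
  · rintro ⟨j, hj, rfl⟩
    split_ifs <;> omega
  · rintro ⟨h1, h2⟩
    by_cases h : a ≤ m
    · exact ⟨2 * (m - a), by omega, by simp [Nat.mul_mod_right]; omega⟩
    · refine ⟨2 * (2 * m - a) + 1, by omega, ?_⟩
      have : (2 * (2 * m - a) + 1) % 2 = 1 := by omega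
      simp [this]
      omega

lemma sigmaRev_isPermList (m : ℕ) : IsPermList ((sigmaAlt m).reverse) := by
  unfold IsPermList
  rw [sigmaRev_length]
  refine ((sigmaAlt m).reverse_perm).trans ?_
  rw [List.perm_ext_iff_of_nodup (sigmaAlt_nodup m)
    (List.Nodup.map (fun a b h => by omega) List.nodup_range)]
  intro a
  rw [sigmaAlt_mem]
  simp only [List.mem_map, List.mem_range]
  constructor
  · rintro ⟨h1, h2⟩; exact ⟨a - 1, by omega, by omega⟩
  · rintro ⟨j, hj, rfl⟩; omega

lemma sigmaRev_contains {β : List ℕ} {c m : ℕ} (h : SplitAt β c) (hm : β.length ≤ m) :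
    PContains ((sigmaAlt m).reverse) β := by
  have gb : ∀ (v : ℕ) (hv : 2 * v + 1 < 2 * m),
      ((sigmaAlt m).reverse).get ⟨2 * v + 1, by rw [sigmaRev_length]; exact hv⟩ = v + 1 := by
    intro v hv
    rw [sigmaRev_get]
    simp only [Fin.val_mk]
    rw [if_neg (by omega)]
    omega
  have gt : ∀ (v : ℕ) (hv : 2 * v < 2 * m),
      ((sigmaAlt m).reverse).get ⟨2 * v, by rw [sigmaRev_length]; exact hv⟩ = m + v + 1 := by
    intro v hv
    rw [sigmaRev_get]
    simp only [Fin.val_mk]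
    rw [if_pos (by omega)]
    omega
  refine ⟨fun p => if _ : β.get p ≤ c then
      ⟨2 * p.val + 1, by rw [sigmaRev_length]; have := p.isLt; omega⟩
    else ⟨2 * p.val, by rw [sigmaRev_length]; have := p.isLt; omega⟩, ?_, ?_⟩
  · intro a b hab
    rw [Fin.lt_def] at hab
    by_cases ha : β.get a ≤ c <;> by_cases hb : β.get b ≤ c <;>
      (simp only [dif_pos, dif_neg, ha, hb, dite_true, dite_false]) <;>
      (rw [Fin.lt_def]; simp only [Fin.val_mk]; omega)
  · intro s t
    have hs := s.isLt
    have ht := t.isLt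
    by_cases hcs : β.get s ≤ c <;> by_cases hct : β.get t ≤ c <;>
      simp only [dif_pos, dif_neg, hcs, hct, dite_true, dite_false]
    · rw [gb s.val (by omega), gb t.val (by omega)]
      constructor
      · intro hlt
        rcases lt_trichotomy s t with h' | h' | h'
        · exact h.1 s t h' hcs hct
        · subst h'; omega
        · exact absurd (h.1 t s h' hct hcs) (by omega)
      · intro hlt
        rcases lt_trichotomy s t with h' | h' | h'
        · rw [Fin.lt_def] at h'; omega
        · subst h'; omega
        · exact absurd (h.1 t s h' hct hcs) (by omega)
    · rw [gb s.val (by omega), gt t.val (by omega)]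
      constructor
      · intro _; omega
      · intro _; omega
    · rw [gt s.val (by omega), gb t.val (by omega)]
      constructor
      · intro h'; omega
      · intro h'; omega
    · rw [gt s.val (by omega), gt t.val (by omega)]
      push_neg at hcs hct
      constructor
      · intro hlt
        rcases lt_trichotomy s t with h' | h' | h'
        · exact h.2 s t h' hcs hct
        · subst h'; omega
        · exact absurd (h.2 t s h' hct hcs) (by omega)
      · intro hlt
        rcases lt_trichotomy s t with h' | h' | h'
        · rw [Fin.lt_def] at h'; omega
        · subst h'; omega
        · exact absurd (h.2 t s h' hct hcs) (by omega)

lemma exists_splitAt {β : List ℕ} (hnd : β.Nodup)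
    (h1 : PAvoids β [3,2,1]) (h2 : PAvoids β [2,1,4,3]) (h3 : PAvoids β [2,4,1,3]) :
    ∃ c, SplitAt β c := by
  classical
  have hinj : ∀ s t : Fin β.length, β.get s = β.get t → s = t := fun s t h =>
    (List.Nodup.get_inj_iff hnd).mp h
  set Bo : Finset (Fin β.length) :=
    Finset.univ.filter (fun t => ∃ s, s < t ∧ β.get t < β.get s) with hBo
  set c : ℕ := Bo.sup (fun t => β.get t) with hc
  have main : ∀ s a y b : Fin β.length, s < a → β.get a < β.get s →
      y < b → β.get b < β.get y → β.get b < β.get s := by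
    intro s a y b hsa hva hyb hvb
    by_contra hcon
    push_neg at hcon
    rcases eq_or_lt_of_le hcon with heq | hlt
    · cases hinj s b heq
      exact h1 (contains3 β y s a hyb hsa hva (by omega))
    · rcases lt_trichotomy y s with hys | hys | hys
      · exact h1 (contains3 β y s a hys hsa hva (by omega))
      · cases hys; omega
      · rcases lt_trichotomy a y with hay | hay | hay
        · exact h2 (contains2143 β s a y b hsa hay hyb hva (by omega) hvb)
        · cases hay; omega
        · rcases lt_trichotomy a b with hab | hab | hab
          · exact h3 (contains2413 β s y a b hys hay hab hva hlt hvb)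
          · cases hab; omega
          · exact h1 (contains3 β y b a hyb hab (by omega) hvb)
  refine ⟨c, ?_, ?_⟩
  · intro s t hst hs ht
    by_contra hq
    push_neg at hq
    rcases eq_or_lt_of_le hq with heq | hlt
    · cases hinj t s heq; exact lt_irrefl _ hst
    · have hsup : c < β.get s := by
        rw [hc]
        apply Finset.sup_lt_iff (show (⊥ : ℕ) < β.get s from by change 0 < _; omega) |>.mpr
        intro b hb
        rw [hBo, Finset.mem_filter] at hb
        obtain ⟨-, y, hyb, hvb⟩ := hb
        exact main s t y b hst hlt hyb hvb
      omega
  · intro s t hst hs ht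
    by_contra hq
    push_neg at hq
    rcases eq_or_lt_of_le hq with heq | hlt
    · cases hinj t s heq; exact lt_irrefl _ hst
    · have : β.get t ≤ c := by
        rw [hc]
        exact Finset.le_sup
          (by rw [hBo, Finset.mem_filter]; exact ⟨Finset.mem_univ _, s, hst, hlt⟩)
      omega

lemma isPermList_nodup {β : List ℕ} (h : IsPermList β) : β.Nodup :=
  h.nodup_iff.mpr (List.Nodup.map (fun a b h => by omega) List.nodup_range)

end Aux

/-- `Av(B)` contains only finitely many of the reversed vertical parallel
alternations `σ_m^r` iff `B` contains a permutation avoiding `321`, `2143` and `2413`. -/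
theorem stmt5 (B : Set (List ℕ)) (hBfin : B.Finite) (hB : ∀ β ∈ B, IsPermList β) :
    {π | (∃ m : ℕ, 1 ≤ m ∧ π = (sigmaAlt m).reverse) ∧ π ∈ Av B}.Finite ↔
      ∃ β ∈ B, PAvoids β [3,2,1] ∧ PAvoids β [2,1,4,3] ∧ PAvoids β [2,4,1,3] := by
  constructor
  · intro hfin
    by_contra hno
    push_neg at hno
    refine absurd hfin (Set.infinite_of_injective_forall_mem
      (f := fun n : ℕ => (sigmaAlt (n + 1)).reverse) ?_ ?_)
    · intro a b hab
      have := congrArg List.length hab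
      rw [sigmaRev_length, sigmaRev_length] at this
      omega
    · intro n
      refine ⟨⟨n + 1, by omega, rfl⟩, sigmaRev_isPermList _, ?_⟩
      intro β hβ hcontra
      have hone : PContains β [3,2,1] ∨ PContains β [2,1,4,3] ∨ PContains β [2,4,1,3] := by
        by_contra h'
        push_neg at h'
        exact (hno β hβ h'.1 h'.2.1) h'.2.2
      have hsp := sigmaRev_splitAt (n + 1)
      rcases hone with hp | hp | hp
      · exact hsp.avoids321 (hcontra.trans' hp)
      · exact hsp.avoids2143 (hcontra.trans' hp)
      · exact hsp.avoids2413 (hcontra.trans' hp)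
  · rintro ⟨β, hβB, hA1, hA2, hA3⟩
    obtain ⟨c, hsplit⟩ := exists_splitAt (isPermList_nodup (hB β hβB)) hA1 hA2 hA3
    apply Set.Finite.subset ((Set.finite_Iio β.length).image (fun m => (sigmaAlt m).reverse))
    rintro π ⟨⟨m, hm1, rfl⟩, hAv⟩
    refine ⟨m, ?_, rfl⟩
    show m < β.length
    by_contra hge
    push_neg at hge
    exact hAv.2 β hβB (sigmaRev_contains hsplit hge)
end
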